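/- Theorem 1 (MSE upper bound): under the setup of the deconvolution estimator ĥat{f}_E with T i.i.d. samples, truncation Kπ, and Y ~ Exp(λ_Y) with λ_Y = Kπ/o, the MSE satisfies E[(f_E(x) - ĥat{f}_E(x))²] ≤ (1/(4π²))·(∫_{|w|≥Kπ} e^{iwx} F{f_E}(w) dw)² + (K²/(4T))·[sqrt(1 + o²) + ln(o + sqrt(1+o²))/o]². -/

import Mathlib

open MeasureTheory ProbabilityTheory Real Set
open scoped ENNReal NNReal


lemma aux_integral_cexp_Ioi {c : ℂ} (hc : 0 < c.re) :
    ∫ y in Set.Ioi (0:ℝ), Complex.exp (-(c * y)) = 1 / c := by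
  have hc0 : c ≠ 0 := fun h => by simp [h] at hc
  have hint : IntegrableOn (fun y : ℝ => Complex.exp (-(c * y))) (Set.Ioi 0) := by
    refine (exp_neg_integrableOn_Ioi 0 hc).mono' ?_ ?_
    · exact (Complex.continuous_exp.comp (continuous_const.mul Complex.continuous_ofReal).neg).aestronglyMeasurable
    · filter_upwards with y
      rw [Complex.norm_exp]
      simp [neg_mul]
  have h1 : Filter.Tendsto (fun b : ℝ => ∫ y in (0:ℝ)..b, Complex.exp (-(c * y)))
      Filter.atTop (nhds (∫ y in Set.Ioi (0:ℝ), Complex.exp (-(c * y)))) :=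
    intervalIntegral_tendsto_integral_Ioi 0 hint Filter.tendsto_id
  have h2 : Filter.Tendsto (fun b : ℝ => ∫ y in (0:ℝ)..b, Complex.exp (-(c * y)))
      Filter.atTop (nhds (1 / c)) := by
    have heq : ∀ b : ℝ, (∫ y in (0:ℝ)..b, Complex.exp (-(c * y)))
        = (Complex.exp (-c * b) - 1) / (-c) := by
      intro b
      have := integral_exp_mul_complex (a := 0) (b := b) (c := -c) (by simpa using hc0)
      simpa [neg_mul] using this
    simp_rw [heq]
    have h3 : Filter.Tendsto (fun b : ℝ => Complex.exp (-c * b)) Filter.atTop (nhds 0) := by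
      rw [tendsto_zero_iff_norm_tendsto_zero]
      have : ∀ b : ℝ, ‖Complex.exp (-c * b)‖ = Real.exp (-(c.re * b)) := by
        intro b; rw [Complex.norm_exp]; simp
      simp_rw [this]
      exact Real.tendsto_exp_atBot.comp
        (Filter.tendsto_neg_atTop_atBot.comp (Filter.Tendsto.const_mul_atTop hc Filter.tendsto_id))
    have h4 : Filter.Tendsto (fun b : ℝ => (Complex.exp (-c * b) - 1) / (-c))
        Filter.atTop (nhds ((0 - 1) / (-c))) :=
      (h3.sub (tendsto_const_nhds (x := (1:ℂ)))).div_const (-c)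
    have : (0 - 1 : ℂ) / (-c) = 1 / c := by field_simp; norm_num
    rwa [this] at h4
  have := tendsto_nhds_unique h1 h2
  rw [this]


lemma aux_hasDerivAt_F (u : ℝ) :
    HasDerivAt (fun u : ℝ => (u * Real.sqrt (1 + u^2) + Real.arsinh u) / 2)
      (Real.sqrt (1 + u^2)) u := by
  have hpos : 0 < 1 + u^2 := by positivity
  have hs : 0 < Real.sqrt (1 + u^2) := Real.sqrt_pos.mpr hpos
  have h1 : HasDerivAt (fun u : ℝ => 1 + u^2) (2*u) u := by
    simpa using ((hasDerivAt_pow 2 u).const_add 1)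
  have h2 : HasDerivAt (fun u : ℝ => Real.sqrt (1 + u^2))
      (1 / (2 * Real.sqrt (1 + u^2)) * (2*u)) u :=
    (Real.hasDerivAt_sqrt (ne_of_gt hpos)).comp u h1
  have h3 : HasDerivAt (fun u : ℝ => u * Real.sqrt (1 + u^2))
      (1 * Real.sqrt (1 + u^2) + u * (1 / (2 * Real.sqrt (1 + u^2)) * (2*u))) u :=
    (hasDerivAt_id u).mul h2
  have h4 := (h3.add (Real.hasDerivAt_arsinh u)).div_const 2
  refine HasDerivAt.congr_deriv h4 ?_
  have hsq : Real.sqrt (1 + u^2) ^ 2 = 1 + u^2 := Real.sq_sqrt hpos.le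
  field_simp
  nlinarith [hsq, hs]

lemma aux_sqrt_integral (o : ℝ) :
    ∫ u in (-o)..o, Real.sqrt (1 + u^2) = o * Real.sqrt (1 + o^2) + Real.arsinh o := by
  have hcont : Continuous fun u : ℝ => Real.sqrt (1 + u^2) :=
    (continuous_const.add (continuous_pow 2)).sqrt
  have := intervalIntegral.integral_eq_sub_of_hasDerivAt
    (f := fun u : ℝ => (u * Real.sqrt (1 + u^2) + Real.arsinh u) / 2)
    (fun u _ => aux_hasDerivAt_F u) (hcont.intervalIntegrable (-o) o)
  rw [this]
  simp only [Real.arsinh_neg, show (-o)^2 = o^2 from by ring]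
  ring

lemma aux_arsinh_eq (x : ℝ) : Real.arsinh x = Real.log (x + Real.sqrt (1 + x^2)) := by
  rw [← Real.exp_arsinh, Real.log_exp]


lemma aux_integrable_of_bound {Ω : Type*} [MeasurableSpace Ω] (μ : Measure Ω)
    [IsFiniteMeasure μ] {E : Type*} [NormedAddCommGroup E] {f : Ω → E}
    (hm : AEStronglyMeasurable f μ) (C : ℝ) (hb : ∀ ω, ‖f ω‖ ≤ C) :
    Integrable f μ :=
  (integrable_const C).mono' hm (Filter.Eventually.of_forall hb)

lemma aux_indep_integral_mul {Ω : Type*} [MeasurableSpace Ω] {μ : Measure Ω}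
    [IsProbabilityMeasure μ] {X Y : Ω → ℂ} (h : IndepFun X Y μ)
    (hXm : AEStronglyMeasurable X μ) (hYm : AEStronglyMeasurable Y μ)
    {CX CY : ℝ} (hbX : ∀ ω, ‖X ω‖ ≤ CX) (hbY : ∀ ω, ‖Y ω‖ ≤ CY) :
    ∫ ω, X ω * Y ω ∂μ = (∫ ω, X ω ∂μ) * ∫ ω, Y ω ∂μ := by
  -- real components
  have hXre : AEStronglyMeasurable (fun ω => (X ω).re) μ :=
    Complex.continuous_re.comp_aestronglyMeasurable hXm
  have hXim : AEStronglyMeasurable (fun ω => (X ω).im) μ :=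
    Complex.continuous_im.comp_aestronglyMeasurable hXm
  have hYre : AEStronglyMeasurable (fun ω => (Y ω).re) μ :=
    Complex.continuous_re.comp_aestronglyMeasurable hYm
  have hYim : AEStronglyMeasurable (fun ω => (Y ω).im) μ :=
    Complex.continuous_im.comp_aestronglyMeasurable hYm
  have bXre : ∀ ω, |(X ω).re| ≤ CX := fun ω => le_trans (Complex.abs_re_le_norm _) (hbX ω)
  have bXim : ∀ ω, |(X ω).im| ≤ CX := fun ω => le_trans (Complex.abs_im_le_norm _) (hbX ω)
  have bYre : ∀ ω, |(Y ω).re| ≤ CY := fun ω => le_trans (Complex.abs_re_le_norm _) (hbY ω)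
  have bYim : ∀ ω, |(Y ω).im| ≤ CY := fun ω => le_trans (Complex.abs_im_le_norm _) (hbY ω)
  have iXre : Integrable (fun ω => (X ω).re) μ := aux_integrable_of_bound μ hXre CX bXre
  have iXim : Integrable (fun ω => (X ω).im) μ := aux_integrable_of_bound μ hXim CX bXim
  have iYre : Integrable (fun ω => (Y ω).re) μ := aux_integrable_of_bound μ hYre CY bYre
  have iYim : Integrable (fun ω => (Y ω).im) μ := aux_integrable_of_bound μ hYim CY bYim
  have iX : Integrable X μ := aux_integrable_of_bound μ hXm CX hbX
  have iY : Integrable Y μ := aux_integrable_of_bound μ hYm CY hbY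
  have iXY : Integrable (fun ω => X ω * Y ω) μ := by
    refine aux_integrable_of_bound μ (hXm.mul hYm) (CX * CY) fun ω => ?_
    rw [norm_mul]
    exact mul_le_mul (hbX ω) (hbY ω) (norm_nonneg _)
      (le_trans (norm_nonneg _) (hbX ω))
  -- independence of components
  have hrr : IndepFun (fun ω => (X ω).re) (fun ω => (Y ω).re) μ :=
    h.comp Complex.measurable_re Complex.measurable_re
  have hri : IndepFun (fun ω => (X ω).re) (fun ω => (Y ω).im) μ :=
    h.comp Complex.measurable_re Complex.measurable_im
  have hir : IndepFun (fun ω => (X ω).im) (fun ω => (Y ω).re) μ :=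
    h.comp Complex.measurable_im Complex.measurable_re
  have hii : IndepFun (fun ω => (X ω).im) (fun ω => (Y ω).im) μ :=
    h.comp Complex.measurable_im Complex.measurable_im
  have err : ∫ ω, (X ω).re * (Y ω).re ∂μ = (∫ ω, (X ω).re ∂μ) * ∫ ω, (Y ω).re ∂μ :=
    hrr.integral_fun_mul_eq_mul_integral iXre.aestronglyMeasurable iYre.aestronglyMeasurable
  have eri : ∫ ω, (X ω).re * (Y ω).im ∂μ = (∫ ω, (X ω).re ∂μ) * ∫ ω, (Y ω).im ∂μ :=
    hri.integral_fun_mul_eq_mul_integral iXre.aestronglyMeasurable iYim.aestronglyMeasurable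
  have eir : ∫ ω, (X ω).im * (Y ω).re ∂μ = (∫ ω, (X ω).im ∂μ) * ∫ ω, (Y ω).re ∂μ :=
    hir.integral_fun_mul_eq_mul_integral iXim.aestronglyMeasurable iYre.aestronglyMeasurable
  have eii : ∫ ω, (X ω).im * (Y ω).im ∂μ = (∫ ω, (X ω).im ∂μ) * ∫ ω, (Y ω).im ∂μ :=
    hii.integral_fun_mul_eq_mul_integral iXim.aestronglyMeasurable iYim.aestronglyMeasurable
  -- products of components are integrable
  have prodbound : ∀ (f g : Ω → ℝ), (∀ ω, |f ω| ≤ CX) → (∀ ω, |g ω| ≤ CY) →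
      ∀ ω, ‖f ω * g ω‖ ≤ CX * CY := by
    intro f g hf hg ω
    rw [Real.norm_eq_abs, abs_mul]
    exact mul_le_mul (hf ω) (hg ω) (abs_nonneg _) (le_trans (abs_nonneg _) (hf ω))
  have iRR : Integrable (fun ω => (X ω).re * (Y ω).re) μ :=
    aux_integrable_of_bound μ (hXre.mul hYre) (CX*CY) (prodbound _ _ bXre bYre)
  have iII : Integrable (fun ω => (X ω).im * (Y ω).im) μ :=
    aux_integrable_of_bound μ (hXim.mul hYim) (CX*CY) (prodbound _ _ bXim bYim)
  have iRI : Integrable (fun ω => (X ω).re * (Y ω).im) μ :=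
    aux_integrable_of_bound μ (hXre.mul hYim) (CX*CY) (prodbound _ _ bXre bYim)
  have iIR : Integrable (fun ω => (X ω).im * (Y ω).re) μ :=
    aux_integrable_of_bound μ (hXim.mul hYre) (CX*CY) (prodbound _ _ bXim bYre)
  -- assemble
  have hre := integral_re (𝕜 := ℂ) iXY
  have him := integral_im (𝕜 := ℂ) iXY
  have hXr := integral_re (𝕜 := ℂ) iX
  have hXi := integral_im (𝕜 := ℂ) iX
  have hYr := integral_re (𝕜 := ℂ) iY
  have hYi := integral_im (𝕜 := ℂ) iY
  simp only [RCLike.re_to_complex, RCLike.im_to_complex] at hre him hXr hXi hYr hYi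
  apply Complex.ext
  · rw [← hre]
    simp only [Complex.mul_re]
    rw [integral_sub iRR iII, err, eii, ← hXr, ← hYr, ← hXi, ← hYi]
  · rw [← him]
    simp only [Complex.mul_im]
    rw [integral_add iRI iIR, eri, eir, ← hXr, ← hYr, ← hXi, ← hYi]


lemma aux_exp_char {Ω : Type*} [MeasurableSpace Ω] {μ : Measure Ω}
    [IsProbabilityMeasure μ] {Y : Ω → ℝ} (hYm : Measurable Y) {lY : ℝ} (hlY : 0 < lY)
    (hY : Measure.map Y μ = expMeasure lY) (w : ℝ) :
    ∫ ω, Complex.exp (-Complex.I * w * Y ω) ∂μ = lY / (lY + Complex.I * w) := by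
  have hfc : Continuous (fun y : ℝ => Complex.exp (-Complex.I * w * y)) :=
    Complex.continuous_exp.comp (continuous_const.mul Complex.continuous_ofReal)
  have h1 : ∫ ω, Complex.exp (-Complex.I * w * Y ω) ∂μ
      = ∫ y : ℝ, Complex.exp (-Complex.I * w * y) ∂(Measure.map Y μ) :=
    (integral_map hYm.aemeasurable hfc.aestronglyMeasurable).symm
  rw [h1, hY]
  show (∫ y : ℝ, Complex.exp (-Complex.I * w * y)
      ∂(volume.withDensity (gammaPDF 1 lY))) = _
  have hpdf : gammaPDF 1 lY = fun y => ((exponentialPDFReal lY y).toNNReal : ℝ≥0∞) := by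
    funext y
    rw [show exponentialPDFReal lY y = gammaPDFReal 1 lY y from rfl, gammaPDF,
      ENNReal.ofReal]
  rw [hpdf, integral_withDensity_eq_integral_smul
    (measurable_exponentialPDFReal lY).real_toNNReal _]
  have h2 : ∀ y : ℝ, (exponentialPDFReal lY y).toNNReal • Complex.exp (-Complex.I * w * y)
      = Set.indicator (Set.Ici (0:ℝ))
          (fun y : ℝ => lY • Complex.exp (-((lY + Complex.I * w) * y))) y := by
    intro y
    rw [NNReal.smul_def, Real.coe_toNNReal _ (exponentialPDFReal_nonneg hlY y)]
    rw [exponentialPDFReal, gammaPDFReal]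
    by_cases hy : 0 ≤ y
    · rw [Set.indicator_of_mem (Set.mem_Ici.mpr hy)]
      simp only [if_pos hy, rpow_one, Real.Gamma_one, div_one, sub_self, rpow_zero, mul_one]
      rw [mul_smul]
      congr 1
      rw [Complex.real_smul, Complex.ofReal_exp, ← Complex.exp_add]
      congr 1
      push_cast
      ring
    · rw [Set.indicator_of_notMem (by simpa using hy), if_neg hy]
      simp
  simp_rw [h2]
  rw [integral_indicator measurableSet_Ici]
  rw [MeasureTheory.integral_Ici_eq_integral_Ioi]
  rw [integral_smul]
  have hre : (0:ℝ) < (lY + Complex.I * w).re := by simp [hlY]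
  rw [aux_integral_cexp_Ioi hre]
  simp [Complex.real_smul]
  ring

lemma aux_norm_cexp (w r : ℝ) : ‖Complex.exp (-Complex.I * ↑w * ↑r)‖ = 1 := by
  rw [show -Complex.I * (w:ℂ) * (r:ℂ) = ((-(w*r) : ℝ):ℂ) * Complex.I by push_cast; ring,
    Complex.norm_exp_ofReal_mul_I]

lemma aux_norm_weight (lY w : ℝ) : ‖(1 : ℂ) + Complex.I * ↑w / ↑lY‖
    = Real.sqrt (1 + (w/lY)^2) := by
  rw [show (1 : ℂ) + Complex.I * ↑w / ↑lY = ((1:ℝ):ℂ) + ((w/lY : ℝ):ℂ) * Complex.I by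
    push_cast; ring, Complex.norm_def, Complex.normSq_add_mul_I]
  norm_num

lemma aux_B_val {lY o : ℝ} (hl : 0 < lY) :
    ∫ w in (-(lY*o))..(lY*o), Real.sqrt (1 + (w/lY)^2)
      = lY * (o * Real.sqrt (1+o^2) + Real.arsinh o) := by
  have h := intervalIntegral.integral_comp_div (a := -(lY*o)) (b := lY*o)
    (c := lY) (f := fun u => Real.sqrt (1 + u^2)) hl.ne'
  rw [show -(lY*o)/lY = -o by field_simp [mul_comm], show lY*o/lY = o by field_simp [mul_comm]] at h
  rw [h, aux_sqrt_integral, smul_eq_mul]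
/-- Theorem 1 (MSE upper bound for the deconvolution estimator): with `T` i.i.d. samples
`z_t` of `Z = e + Y`, `Y ~ Exp(λ_Y)`, truncation `Kπ` and `o = Kπ/λ_Y`,
`E[(f_E(x) - ĥ(x))²] ≤ (1/4π²)(∫_{|w|≥Kπ} e^{iwx}F{f_E}(w) dw)²
  + (K²/4T)[sqrt(1+o²) + ln(o+sqrt(1+o²))/o]²`. -/
theorem mse_upper_bound {Ω : Type*} [MeasurableSpace Ω]
    (μ : Measure Ω) [IsProbabilityMeasure μ] (e Y : Ω → ℝ)
    (hem : Measurable e) (hYm : Measurable Y)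
    (fE : ℝ → ℝ)
    (hdens : Measure.map e μ = volume.withDensity (fun x => ENNReal.ofReal (fE x)))
    (lY : ℝ) (hlY : 0 < lY) (hY : Measure.map Y μ = expMeasure lY)
    (hindep : IndepFun e Y μ)
    (FfE : ℝ → ℂ) (hFfE : FfE = fun w : ℝ => ∫ ω, Complex.exp (-Complex.I * w * e ω) ∂μ)
    (hFint : Integrable FfE)
    (T : ℕ) (hT : 0 < T) (z : Fin T → Ω → ℝ) (hzm : ∀ t, Measurable (z t))
    (hziid : iIndepFun z μ)
    (hzdist : ∀ t, Measure.map (z t) μ = Measure.map (fun ω => e ω + Y ω) μ)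
    (K x : ℝ) (hK : 0 < K) (o : ℝ) (ho : o = K * π / lY)
    (hinv : (fE x : ℂ)
      = (1 / (2 * (π : ℂ))) * ∫ w : ℝ, Complex.exp (Complex.I * w * x) * FfE w) :
    (∫ ω, ‖(fE x : ℂ) - (1 / (2 * (π : ℂ) * T)) * ∑ t, (∫ w in (-(K * π))..(K * π),
          Complex.exp (-Complex.I * w * ((z t ω : ℂ) - x)) * (1 + Complex.I * w / lY))‖ ^ 2 ∂μ)
      ≤ (1 / (4 * π ^ 2))
          * ‖∫ w in {w : ℝ | K * π ≤ |w|}, Complex.exp (Complex.I * w * x) * FfE w‖ ^ 2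
        + K ^ 2 / (4 * T)
          * (Real.sqrt (1 + o ^ 2) + Real.log (o + Real.sqrt (1 + o ^ 2)) / o) ^ 2 := by
  have hapos : 0 < K * π := mul_pos hK pi_pos
  have hle : -(K * π) ≤ K * π := by linarith
  have hopos : 0 < o := by rw [ho]; positivity
  have halo : lY * o = K * π := by rw [ho]; field_simp
  have hTR : (0:ℝ) < (T:ℝ) := Nat.cast_pos.mpr hT
  have hTC : (T:ℂ) ≠ 0 := Nat.cast_ne_zero.mpr hT.ne'
  have hpiC : (π:ℂ) ≠ 0 := Complex.ofReal_ne_zero.mpr pi_ne_zero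
  set G : ℝ → ℝ → ℂ := fun z w =>
    Complex.exp (-Complex.I * ↑w * ((z:ℂ) - ↑x)) * (1 + Complex.I * ↑w / ↑lY) with hGdef
  set g : ℝ → ℂ := fun z => ∫ w in (-(K * π))..(K * π), G z w with hgdef
  have hGcont : Continuous fun p : ℝ × ℝ => G p.1 p.2 := by
    apply Continuous.mul
    · exact Complex.continuous_exp.comp
        (((continuous_const.mul ((Complex.continuous_ofReal.comp continuous_snd))).mul
          ((Complex.continuous_ofReal.comp continuous_fst).sub continuous_const)))
    · exact continuous_const.add
        ((continuous_const.mul (Complex.continuous_ofReal.comp continuous_snd)).div_const _)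
  have hGnorm : ∀ z w : ℝ, ‖G z w‖ = Real.sqrt (1 + (w/lY)^2) := by
    intro z w
    rw [hGdef]
    simp only
    rw [norm_mul, show ((z:ℂ) - ↑x) = ((z - x : ℝ) : ℂ) by push_cast; ring,
      aux_norm_cexp, aux_norm_weight, one_mul]
  set B : ℝ := lY * (o * Real.sqrt (1+o^2) + Real.arsinh o) with hBdef
  have hB : ∫ w in (-(K * π))..(K * π), Real.sqrt (1 + (w/lY)^2) = B := by
    rw [show K * π = lY * o from halo.symm]; exact aux_B_val hlY
  have hgnorm : ∀ z : ℝ, ‖g z‖ ≤ B := by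
    intro z
    calc ‖g z‖ ≤ ∫ w in (-(K * π))..(K * π), ‖G z w‖ :=
          intervalIntegral.norm_integral_le_integral_norm hle
    _ = B := by
        rw [intervalIntegral.integral_congr (g := fun w => Real.sqrt (1+(w/lY)^2))
          (fun w _ => hGnorm z w)]
        exact hB
  have hBpos : 0 ≤ B := le_trans (norm_nonneg _) (hgnorm 0)
  have hgsm : StronglyMeasurable g := by
    have hrw : g = fun z => ∫ w in Ioc (-(K * π)) (K * π), G z w :=
      funext fun z => intervalIntegral.integral_of_le hle
    rw [hrw]
    exact StronglyMeasurable.integral_prod_right' (hGcont.stronglyMeasurable)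
  set Z : Ω → ℝ := fun ω => e ω + Y ω with hZdef
  have hZm : Measurable Z := hem.add hYm
  set m : ℂ := ∫ w in (-(K * π))..(K * π), Complex.exp (Complex.I * ↑w * ↑x) * FfE w
    with hmdef
  -- mean over one sample
  have hmean0 : ∫ ω, g (Z ω) ∂μ = m := by
    set ν : Measure ℝ := volume.restrict (Ioc (-(K * π)) (K * π)) with hνdef
    haveI : IsFiniteMeasure ν := ⟨by
      rw [hνdef, Measure.restrict_apply_univ]; exact measure_Ioc_lt_top⟩
    have hgZrw : ∀ ω, g (Z ω) = ∫ w, G (Z ω) w ∂ν := fun ω =>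
      intervalIntegral.integral_of_le hle
    have hmeas : AEStronglyMeasurable (Function.uncurry fun ω w => G (Z ω) w) (μ.prod ν) :=
      (hGcont.measurable.comp ((hZm.comp measurable_fst).prodMk measurable_snd)
        ).aestronglyMeasurable
    have hprod : Integrable (Function.uncurry fun ω w => G (Z ω) w) (μ.prod ν) := by
      refine (integrable_const (Real.sqrt (1 + o^2))).mono' hmeas ?_
      have hpr : μ.prod ν = (μ.prod volume).restrict (univ ×ˢ Ioc (-(K * π)) (K * π)) := by
        rw [hνdef, ← Measure.prod_restrict, Measure.restrict_univ]
      rw [hpr]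
      filter_upwards [ae_restrict_mem (MeasurableSet.univ.prod measurableSet_Ioc)] with p hp
      have hp2 : p.2 ∈ Ioc (-(K * π)) (K * π) := hp.2
      show ‖G (Z p.1) p.2‖ ≤ _
      rw [hGnorm]
      apply Real.sqrt_le_sqrt
      have h2 : p.2^2 ≤ (K*π)^2 := sq_le_sq' (le_of_lt hp2.1) hp2.2
      have h3 : (p.2/lY)^2 ≤ o^2 := by
        rw [div_pow, show o^2 = (K*π)^2/lY^2 by rw [ho]; ring]
        gcongr
      linarith
    have hswap : ∫ ω, ∫ w, G (Z ω) w ∂ν ∂μ = ∫ w, ∫ ω, G (Z ω) w ∂μ ∂ν :=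
      integral_integral_swap hprod
    have hinner : ∀ w : ℝ, ∫ ω, G (Z ω) w ∂μ
        = Complex.exp (Complex.I * ↑w * ↑x) * FfE w := by
      intro w
      have hmexp : Measurable fun r : ℝ => Complex.exp (-Complex.I * ↑w * ↑r) :=
        (Complex.continuous_exp.comp
          (continuous_const.mul Complex.continuous_ofReal)).measurable
      have hfac : ∀ ω, G (Z ω) w = (Complex.exp (-Complex.I * ↑w * ↑(e ω))
          * Complex.exp (-Complex.I * ↑w * ↑(Y ω)))
          * (Complex.exp (Complex.I * ↑w * ↑x) * (1 + Complex.I * ↑w / ↑lY)) := by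
        intro ω
        simp only [hGdef, hZdef]
        rw [show (-Complex.I * ↑w * ((↑(e ω + Y ω):ℂ) - ↑x))
            = (-Complex.I * ↑w * ↑(e ω)) + ((-Complex.I * ↑w * ↑(Y ω))
              + (Complex.I * ↑w * ↑x)) from by push_cast; ring]
        rw [Complex.exp_add, Complex.exp_add]
        ring
      rw [integral_congr_ae (Filter.Eventually.of_forall hfac), integral_mul_const]
      have hindprod : ∫ ω, Complex.exp (-Complex.I * ↑w * ↑(e ω))
          * Complex.exp (-Complex.I * ↑w * ↑(Y ω)) ∂μ
          = FfE w * ((lY:ℂ) / ((lY:ℂ) + Complex.I * ↑w)) := by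
        have hind2 : IndepFun (fun ω => Complex.exp (-Complex.I * ↑w * ↑(e ω)))
            (fun ω => Complex.exp (-Complex.I * ↑w * ↑(Y ω))) μ :=
          hindep.comp hmexp hmexp
        rw [aux_indep_integral_mul hind2
          ((hmexp.comp hem).aestronglyMeasurable) ((hmexp.comp hYm).aestronglyMeasurable)
          (CX := 1) (CY := 1) (fun ω => le_of_eq (aux_norm_cexp w (e ω)))
          (fun ω => le_of_eq (aux_norm_cexp w (Y ω)))]
        rw [show ∫ ω, Complex.exp (-Complex.I * ↑w * ↑(e ω)) ∂μ = FfE w by rw [hFfE],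
          aux_exp_char hYm hlY hY w]
      rw [hindprod]
      have hlne : (lY:ℂ) ≠ 0 := Complex.ofReal_ne_zero.mpr hlY.ne'
      have hlw : (lY:ℂ) + Complex.I * ↑w ≠ 0 := by
        intro hcon
        have := congrArg Complex.re hcon
        simp at this
        linarith
      field_simp
    rw [integral_congr_ae (Filter.Eventually.of_forall hgZrw), hswap,
      integral_congr_ae (Filter.Eventually.of_forall hinner), hmdef,
      intervalIntegral.integral_of_le hle]
  have hmean : ∀ t, ∫ ω, g (z t ω) ∂μ = m := by
    intro t
    have h1 : ∫ ω, g (z t ω) ∂μ = ∫ v, g v ∂(Measure.map (z t) μ) :=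
      (integral_map (hzm t).aemeasurable hgsm.aestronglyMeasurable).symm
    rw [h1, hzdist t, integral_map hZm.aemeasurable hgsm.aestronglyMeasurable]
    exact hmean0
  have hm_bd : ‖m‖ ≤ B := by
    rw [← hmean0]
    calc ‖∫ ω, g (Z ω) ∂μ‖ ≤ B * (μ univ).toReal :=
      norm_integral_le_of_norm_le_const (Filter.Eventually.of_forall fun ω => hgnorm _)
    _ = B := by simp
  -- integrability toolbox
  have hgz_meas : ∀ t, AEStronglyMeasurable (fun ω => g (z t ω)) μ := fun t =>
    (hgsm.comp_measurable (hzm t)).aestronglyMeasurable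
  have igz : ∀ t, Integrable (fun ω => g (z t ω)) μ := fun t =>
    aux_integrable_of_bound μ (hgz_meas t) B fun ω => hgnorm _
  have hh_meas : ∀ t, AEStronglyMeasurable (fun ω => g (z t ω) - m) μ := fun t =>
    (hgz_meas t).sub aestronglyMeasurable_const
  have hh_bd : ∀ t ω, ‖g (z t ω) - m‖ ≤ 2 * B := by
    intro t ω
    calc ‖g (z t ω) - m‖ ≤ ‖g (z t ω)‖ + ‖m‖ := norm_sub_le _ _
    _ ≤ 2 * B := by linarith [hgnorm (z t ω), hm_bd]
  have ih : ∀ t, Integrable (fun ω => g (z t ω) - m) μ := fun t =>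
    aux_integrable_of_bound μ (hh_meas t) (2*B) (hh_bd t)
  have hinth : ∀ t, ∫ ω, (g (z t ω) - m) ∂μ = 0 := by
    intro t
    rw [integral_sub (igz t) (integrable_const m), hmean t, integral_const]
    simp
  set S : Ω → ℂ := fun ω => ∑ t, (g (z t ω) - m) with hSdef
  have hSm : AEStronglyMeasurable S μ :=
    Finset.aestronglyMeasurable_fun_sum Finset.univ fun t _ => hh_meas t
  have hSbd : ∀ ω, ‖S ω‖ ≤ (T:ℝ) * (2*B) := by
    intro ω
    calc ‖S ω‖ ≤ ∑ t : Fin T, ‖g (z t ω) - m‖ := norm_sum_le _ _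
    _ ≤ ∑ _t : Fin T, (2*B) := Finset.sum_le_sum fun t _ => hh_bd t ω
    _ = (T:ℝ) * (2*B) := by simp [Finset.sum_const, Finset.card_univ]
  have iS : Integrable S μ := aux_integrable_of_bound μ hSm _ hSbd
  have hIntS : ∫ ω, S ω ∂μ = 0 := by
    rw [hSdef]
    rw [integral_finset_sum Finset.univ fun t _ => ih t]
    simp [hinth]
  set c1 : ℂ := 1 / (2 * (π:ℂ) * (T:ℂ)) with hc1def
  set b : ℂ := (fE x : ℂ) - (1 / (2 * (π:ℂ))) * m with hbdef
  have hpoint : ∀ ω, (fE x : ℂ) - (1 / (2 * (π : ℂ) * T)) * ∑ t, (∫ w in (-(K * π))..(K * π),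
        Complex.exp (-Complex.I * w * ((z t ω : ℂ) - x)) * (1 + Complex.I * w / lY))
      = b - c1 * S ω := by
    intro ω
    show (fE x : ℂ) - c1 * ∑ t, g (z t ω) = b - c1 * S ω
    rw [hSdef, hbdef]
    simp only
    rw [Finset.sum_sub_distrib, Finset.sum_const, Finset.card_univ, Fintype.card_fin,
      nsmul_eq_mul]
    rw [hc1def]
    field_simp
    ring
  -- expectations of products
  have iSS : Integrable (fun ω => S ω * (starRingEnd ℂ) (S ω)) μ := by
    refine aux_integrable_of_bound μ (hSm.mul ?_) (((T:ℝ)*(2*B))*((T:ℝ)*(2*B))) ?_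
    · exact Complex.continuous_conj.comp_aestronglyMeasurable hSm
    · intro ω
      rw [norm_mul, RCLike.norm_conj]
      exact mul_le_mul (hSbd ω) (hSbd ω) (norm_nonneg _)
        (le_trans (norm_nonneg _) (hSbd ω))
  have step3 : ∫ ω, S ω * (starRingEnd ℂ) (S ω) ∂μ
      = ∑ t : Fin T, ∫ ω, (g (z t ω) - m) * (starRingEnd ℂ) (g (z t ω) - m) ∂μ := by
    have hSS : ∀ ω, S ω * (starRingEnd ℂ) (S ω)
        = ∑ s : Fin T, ∑ t : Fin T, (g (z s ω) - m) * (starRingEnd ℂ) (g (z t ω) - m) := by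
      intro ω
      rw [hSdef]
      simp only
      rw [map_sum, Finset.sum_mul_sum]
    have ipair : ∀ s t : Fin T,
        Integrable (fun ω => (g (z s ω) - m) * (starRingEnd ℂ) (g (z t ω) - m)) μ := by
      intro s t
      refine aux_integrable_of_bound μ ((hh_meas s).mul
        (Complex.continuous_conj.comp_aestronglyMeasurable (hh_meas t))) ((2*B)*(2*B))
        fun ω => ?_
      rw [norm_mul, RCLike.norm_conj]
      exact mul_le_mul (hh_bd s ω) (hh_bd t ω) (norm_nonneg _)
        (le_trans (norm_nonneg _) (hh_bd s ω))
    have hoff : ∀ s t : Fin T, s ≠ t →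
        ∫ ω, (g (z s ω) - m) * (starRingEnd ℂ) (g (z t ω) - m) ∂μ = 0 := by
      intro s t hst
      have hφ : Measurable fun v : ℝ => g v - m := hgsm.measurable.sub measurable_const
      have hψ : Measurable fun v : ℝ => (starRingEnd ℂ) (g v - m) :=
        Complex.continuous_conj.measurable.comp hφ
      have hind2 : IndepFun (fun ω => g (z s ω) - m)
          (fun ω => (starRingEnd ℂ) (g (z t ω) - m)) μ :=
        (hziid.indepFun hst).comp hφ hψ
      rw [aux_indep_integral_mul hind2 (hh_meas s)
        (Complex.continuous_conj.comp_aestronglyMeasurable (hh_meas t))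
        (CX := 2*B) (CY := 2*B) (hh_bd s) (fun ω => by rw [RCLike.norm_conj]; exact hh_bd t ω)]
      rw [hinth s, zero_mul]
    rw [integral_congr_ae (Filter.Eventually.of_forall hSS)]
    rw [integral_finset_sum Finset.univ fun s _ => integrable_finset_sum _ fun t _ => ipair s t]
    refine Finset.sum_congr rfl fun s _ => ?_
    rw [integral_finset_sum Finset.univ fun t _ => ipair s t]
    exact Finset.sum_eq_single s (fun t _ hts => hoff s t (Ne.symm hts))
      (fun h => absurd (Finset.mem_univ s) h)
  have step4 : ∀ t : Fin T,
      (∫ ω, (g (z t ω) - m) * (starRingEnd ℂ) (g (z t ω) - m) ∂μ).re ≤ B^2 := by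
    intro t
    have hexp2 : ∀ ω, (g (z t ω) - m) * (starRingEnd ℂ) (g (z t ω) - m)
        = g (z t ω) * (starRingEnd ℂ) (g (z t ω)) - m * (starRingEnd ℂ) (g (z t ω))
          - (starRingEnd ℂ) m * g (z t ω) + m * (starRingEnd ℂ) m := by
      intro ω
      simp only [map_sub]
      ring
    have iqc : Integrable (fun ω => (starRingEnd ℂ) (g (z t ω))) μ := by
      refine aux_integrable_of_bound μ
        (Complex.continuous_conj.comp_aestronglyMeasurable (hgz_meas t)) B fun ω => ?_
      rw [RCLike.norm_conj]; exact hgnorm _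
    have iqq : Integrable (fun ω => g (z t ω) * (starRingEnd ℂ) (g (z t ω))) μ := by
      refine aux_integrable_of_bound μ ((hgz_meas t).mul
        (Complex.continuous_conj.comp_aestronglyMeasurable (hgz_meas t))) (B*B) fun ω => ?_
      rw [norm_mul, RCLike.norm_conj]
      exact mul_le_mul (hgnorm _) (hgnorm _) (norm_nonneg _) hBpos
    have hIq : ∫ ω, (starRingEnd ℂ) (g (z t ω)) ∂μ = (starRingEnd ℂ) m := by
      rw [integral_conj, hmean t]
    have iA : Integrable (fun ω => g (z t ω) * (starRingEnd ℂ) (g (z t ω))) μ := iqq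
    have iB : Integrable (fun ω => m * (starRingEnd ℂ) (g (z t ω))) μ := iqc.const_mul _
    have iC : Integrable (fun ω => (starRingEnd ℂ) m * g (z t ω)) μ := (igz t).const_mul _
    have iAB : Integrable (fun ω => g (z t ω) * (starRingEnd ℂ) (g (z t ω))
        - m * (starRingEnd ℂ) (g (z t ω))) μ := iA.sub iB
    have iABC : Integrable (fun ω => g (z t ω) * (starRingEnd ℂ) (g (z t ω))
        - m * (starRingEnd ℂ) (g (z t ω)) - (starRingEnd ℂ) m * g (z t ω)) μ := iAB.sub iC
    have hval : ∫ ω, (g (z t ω) - m) * (starRingEnd ℂ) (g (z t ω) - m) ∂μ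
        = (∫ ω, g (z t ω) * (starRingEnd ℂ) (g (z t ω)) ∂μ) - (starRingEnd ℂ) m * m := by
      rw [integral_congr_ae (Filter.Eventually.of_forall hexp2)]
      rw [integral_add iABC (integrable_const _), integral_sub iAB iC, integral_sub iA iB,
        integral_const, integral_const_mul, integral_const_mul, hIq, hmean t]
      simp
      ring
    rw [hval, Complex.sub_re]
    have h1 : (∫ ω, g (z t ω) * (starRingEnd ℂ) (g (z t ω)) ∂μ).re ≤ B^2 := by
      refine le_trans (Complex.re_le_norm _) ?_
      calc ‖∫ ω, g (z t ω) * (starRingEnd ℂ) (g (z t ω)) ∂μ‖ ≤ (B*B) * (μ univ).toReal := by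
            refine norm_integral_le_of_norm_le_const (Filter.Eventually.of_forall fun ω => ?_)
            rw [norm_mul, RCLike.norm_conj]
            exact mul_le_mul (hgnorm _) (hgnorm _) (norm_nonneg _) hBpos
      _ = B^2 := by simp [sq]
    have h2 : 0 ≤ ((starRingEnd ℂ) m * m).re := by
      rw [mul_comm, Complex.mul_conj, Complex.ofReal_re]
      exact Complex.normSq_nonneg m
    linarith
  -- expand the square
  have hns : ∀ v : ℂ, (‖v‖:ℝ)^2 = (v * (starRingEnd ℂ) v).re := by
    intro v
    rw [Complex.mul_conj, Complex.ofReal_re, Complex.normSq_eq_norm_sq]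
  have ibD : Integrable (fun ω => (b - c1 * S ω) * (starRingEnd ℂ) (b - c1 * S ω)) μ := by
    have hme : AEStronglyMeasurable (fun ω => b - c1 * S ω) μ :=
      aestronglyMeasurable_const.sub (hSm.const_mul c1)
    have hbound : ∀ ω, ‖b - c1 * S ω‖ ≤ ‖b‖ + ‖c1‖ * ((T:ℝ)*(2*B)) := by
      intro ω
      calc ‖b - c1 * S ω‖ ≤ ‖b‖ + ‖c1 * S ω‖ := norm_sub_le _ _
      _ ≤ ‖b‖ + ‖c1‖ * ((T:ℝ)*(2*B)) := by
          rw [norm_mul]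
          have := mul_le_mul_of_nonneg_left (hSbd ω) (norm_nonneg c1)
          linarith
    refine aux_integrable_of_bound μ (hme.mul
      (Complex.continuous_conj.comp_aestronglyMeasurable hme))
      ((‖b‖ + ‖c1‖ * ((T:ℝ)*(2*B))) * (‖b‖ + ‖c1‖ * ((T:ℝ)*(2*B)))) ?_
    intro ω
    rw [norm_mul, RCLike.norm_conj]
    exact mul_le_mul (hbound ω) (hbound ω) (norm_nonneg _)
      (le_trans (norm_nonneg _) (hbound ω))
  have step2 : ∫ ω, (b - c1 * S ω) * (starRingEnd ℂ) (b - c1 * S ω) ∂μ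
      = b * (starRingEnd ℂ) b
        + (c1 * (starRingEnd ℂ) c1) * ∫ ω, S ω * (starRingEnd ℂ) (S ω) ∂μ := by
    have hexp : ∀ ω, (b - c1 * S ω) * (starRingEnd ℂ) (b - c1 * S ω)
        = b * (starRingEnd ℂ) b - (b * (starRingEnd ℂ) c1) * (starRingEnd ℂ) (S ω)
          - (c1 * (starRingEnd ℂ) b) * S ω
          + (c1 * (starRingEnd ℂ) c1) * (S ω * (starRingEnd ℂ) (S ω)) := by
      intro ω
      simp only [map_sub, map_mul]
      ring
    have iSc : Integrable (fun ω => (starRingEnd ℂ) (S ω)) μ := by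
      refine aux_integrable_of_bound μ
        (Complex.continuous_conj.comp_aestronglyMeasurable hSm) ((T:ℝ)*(2*B)) fun ω => ?_
      rw [RCLike.norm_conj]; exact hSbd ω
    have hIntSc : ∫ ω, (starRingEnd ℂ) (S ω) ∂μ = 0 := by
      rw [integral_conj, hIntS, map_zero]
    have iA : Integrable (fun _ : Ω => b * (starRingEnd ℂ) b) μ := integrable_const _
    have iB : Integrable (fun ω => (b * (starRingEnd ℂ) c1) * (starRingEnd ℂ) (S ω)) μ :=
      iSc.const_mul _
    have iC : Integrable (fun ω => (c1 * (starRingEnd ℂ) b) * S ω) μ := iS.const_mul _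
    have iD : Integrable (fun ω => (c1 * (starRingEnd ℂ) c1) * (S ω * (starRingEnd ℂ) (S ω))) μ :=
      iSS.const_mul _
    have iAB : Integrable (fun ω => b * (starRingEnd ℂ) b
        - (b * (starRingEnd ℂ) c1) * (starRingEnd ℂ) (S ω)) μ := iA.sub iB
    have iABC : Integrable (fun ω => b * (starRingEnd ℂ) b
        - (b * (starRingEnd ℂ) c1) * (starRingEnd ℂ) (S ω)
        - (c1 * (starRingEnd ℂ) b) * S ω) μ := iAB.sub iC
    rw [integral_congr_ae (Filter.Eventually.of_forall hexp)]
    rw [integral_add iABC iD, integral_sub iAB iC, integral_sub iA iB,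
      integral_const, integral_const_mul, integral_const_mul, integral_const_mul,
      hIntS, hIntSc]
    simp
  have step1 : (∫ ω, ‖(fE x : ℂ) - (1 / (2 * (π : ℂ) * T)) * ∑ t,
        (∫ w in (-(K * π))..(K * π),
          Complex.exp (-Complex.I * w * ((z t ω : ℂ) - x)) * (1 + Complex.I * w / lY))‖ ^ 2 ∂μ)
      = (∫ ω, (b - c1 * S ω) * (starRingEnd ℂ) (b - c1 * S ω) ∂μ).re := by
    have e1 : (∫ ω, ‖(fE x : ℂ) - (1 / (2 * (π : ℂ) * T)) * ∑ t,
        (∫ w in (-(K * π))..(K * π),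
          Complex.exp (-Complex.I * w * ((z t ω : ℂ) - x)) * (1 + Complex.I * w / lY))‖ ^ 2 ∂μ)
        = ∫ ω, ((b - c1 * S ω) * (starRingEnd ℂ) (b - c1 * S ω)).re ∂μ := by
      apply integral_congr_ae
      filter_upwards with ω
      rw [hpoint ω, ← hns]
    rw [e1]
    simpa using integral_re (𝕜 := ℂ) ibD
  -- bias value
  have hbias : ‖b‖^2 = (1/(4*π^2))
      * ‖∫ w in {w : ℝ | K * π ≤ |w|}, Complex.exp (Complex.I * w * x) * FfE w‖ ^ 2 := by
    have hIoc : m = ∫ w in Ioo (-(K*π)) (K*π), Complex.exp (Complex.I*↑w*↑x) * FfE w := by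
      rw [hmdef, intervalIntegral.integral_of_le hle, integral_Ioc_eq_integral_Ioo]
    have hseteq : {w : ℝ | K*π ≤ |w|} = (Ioo (-(K*π)) (K*π))ᶜ := by
      ext w
      simp only [mem_setOf_eq, mem_compl_iff, mem_Ioo, not_and_or, not_lt, le_abs]
      constructor
      · rintro (h|h)
        · right; exact h
        · left; linarith
      · rintro (h|h)
        · right; linarith
        · left; exact h
    have hIntFull : Integrable (fun w : ℝ => Complex.exp (Complex.I * ↑w * ↑x) * FfE w)
        volume := by
      refine hFint.bdd_mul (c := 1) ?_ ?_
      · exact (Complex.continuous_exp.comp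
          ((continuous_const.mul Complex.continuous_ofReal).mul
            continuous_const)).aestronglyMeasurable
      · refine Filter.Eventually.of_forall fun w => ?_
        rw [show Complex.I * (w:ℂ) * (x:ℂ) = ((w*x : ℝ):ℂ) * Complex.I by push_cast; ring,
          Complex.norm_exp_ofReal_mul_I]
    have hsplit : (∫ w in Ioo (-(K*π)) (K*π), Complex.exp (Complex.I*↑w*↑x) * FfE w)
        + (∫ w in (Ioo (-(K*π)) (K*π))ᶜ, Complex.exp (Complex.I*↑w*↑x) * FfE w)
        = ∫ w : ℝ, Complex.exp (Complex.I*↑w*↑x) * FfE w :=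
      integral_add_compl measurableSet_Ioo hIntFull
    have hbval : b = (1/(2*(π:ℂ)))
        * ∫ w in {w : ℝ | K * π ≤ |w|}, Complex.exp (Complex.I * w * x) * FfE w := by
      rw [hbdef, hinv, hseteq, ← hsplit, hIoc]
      ring
    rw [hbval, norm_mul, mul_pow]
    congr 1
    rw [show (1:ℂ)/(2*(π:ℂ)) = ((1/(2*π) : ℝ):ℂ) by push_cast; ring,
      Complex.norm_real, Real.norm_eq_abs, abs_of_pos (by positivity)]
    rw [div_pow]
    norm_num
    ring
  -- numeric variance bound
  have hvar : Complex.normSq c1 * ((T:ℝ) * B^2) = K ^ 2 / (4 * T)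
      * (Real.sqrt (1 + o ^ 2) + Real.log (o + Real.sqrt (1 + o ^ 2)) / o) ^ 2 := by
    have hc1' : Complex.normSq c1 = (1/(2*π*(T:ℝ))) * (1/(2*π*(T:ℝ))) := by
      rw [hc1def, show (1 : ℂ)/(2*(π:ℂ)*(T:ℂ)) = ((1/(2*π*(T:ℝ)) : ℝ) : ℂ) by
        push_cast; ring, Complex.normSq_ofReal]
    have hBeq : B = (K*π)*(Real.sqrt (1+o^2) + Real.log (o + Real.sqrt (1+o^2))/o) := by
      rw [hBdef, aux_arsinh_eq, ← halo]
      field_simp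
    rw [hc1', hBeq]
    have hpin : (π:ℝ) ≠ 0 := pi_ne_zero
    field_simp
    ring
  -- assembly
  rw [step1, step2]
  have hc1r : c1 * (starRingEnd ℂ) c1 = (Complex.normSq c1 : ℝ) := Complex.mul_conj c1
  rw [hc1r, step3]
  rw [Complex.add_re, ← hns b]
  have hrest : ((Complex.normSq c1 : ℂ) * ∑ t : Fin T,
      ∫ ω, (g (z t ω) - m) * (starRingEnd ℂ) (g (z t ω) - m) ∂μ).re
      ≤ Complex.normSq c1 * ((T:ℝ) * B^2) := by
    rw [Complex.re_ofReal_mul, Complex.re_sum]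
    have : ∑ t : Fin T, (∫ ω, (g (z t ω) - m) * (starRingEnd ℂ) (g (z t ω) - m) ∂μ).re
        ≤ ∑ _t : Fin T, B^2 := Finset.sum_le_sum fun t _ => step4 t
    have h2 : ∑ _t : Fin T, (B^2:ℝ) = (T:ℝ) * B^2 := by
      simp [Finset.sum_const, Finset.card_univ]
    rw [h2] at this
    exact mul_le_mul_of_nonneg_left this (Complex.normSq_nonneg c1)
  calc ‖b‖^2 + ((Complex.normSq c1 : ℂ) * ∑ t : Fin T,
      ∫ ω, (g (z t ω) - m) * (starRingEnd ℂ) (g (z t ω) - m) ∂μ).re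
      ≤ ‖b‖^2 + Complex.normSq c1 * ((T:ℝ) * B^2) := by linarith
  _ = _ := by rw [hbias, hvar]
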